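/- Let f : [0,∞) → ℝ be a function such that for some ε > 0 and all r, δ > 0: f(r) ≥ ((δ+ε)/(r+δ))·f(ε) + ((r−ε)/(r+δ))·f(r+δ), with f(ε) ≥ 0. Then the limit lim_{r→∞} f(r)/r exists in [0, +∞]. -/

import Mathlib

open Filter Set

/-- abstract existence of the volume entropy.  If `f` satisfies the
concavity-type inequality `f(r) ≥ ((δ+ε)/(r+δ))f(ε) + ((r-ε)/(r+δ))f(r+δ)` for some
`ε > 0` with `f(ε) ≥ 0` and all `r, δ > 0`, then `lim_{r→∞} f(r)/r` exists in `[0, +∞]`. -/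
theorem entropy_limit_exists
    (f : ℝ → ℝ) (ε : ℝ) (hε : 0 < ε) (hfε : 0 ≤ f ε)
    (hconc : ∀ r δ : ℝ, 0 < r → 0 < δ →
      f r ≥ ((δ + ε) / (r + δ)) * f ε + ((r - ε) / (r + δ)) * f (r + δ)) :
    ∃ L : EReal, 0 ≤ L ∧
      Tendsto (fun r : ℝ => ((f r / r : ℝ) : EReal)) atTop (nhds L) := by
  -- Step 1: the key clean inequality
  have key : ∀ r s : ℝ, 0 < r → r < s →
      (r - ε) * (f s - f ε) ≤ (f r - f ε) * s := by
    intro r s hr hrs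
    have hs : 0 < s := hr.trans hrs
    have h := hconc r (s - r) hr (by linarith)
    rw [show r + (s - r) = s by ring] at h
    rw [ge_iff_le, div_mul_eq_mul_div, div_mul_eq_mul_div, ← add_div,
      div_le_iff₀ hs] at h
    nlinarith [h]
  -- Step 2: f r ≥ f ε for all r > ε
  have nonneg : ∀ r : ℝ, ε < r → 0 ≤ f r - f ε := by
    intro r hr
    have hr0 : 0 < r := hε.trans hr
    set M : ℝ := |f (r + 2) - f ε| with hM
    have hM0 : 0 ≤ M := abs_nonneg _
    set q : ℝ := (r + 1 - ε) / (r + 1) with hq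
    have hr1 : (0:ℝ) < r + 1 := by linarith
    have hq0 : 0 ≤ q := div_nonneg (by linarith) (by linarith)
    have hq1 : q < 1 := by rw [hq, div_lt_one hr1]; linarith
    have C : ∀ n : ℕ, ∀ a : ℝ, r ≤ a → a < r + 1 → -(q ^ n * M) ≤ f a - f ε := by
      intro n
      induction n with
      | zero =>
        intro a ha1 ha2
        have ha0 : 0 < a := lt_of_lt_of_le hr0 ha1
        have hk := key a (r + 2) ha0 (by linarith)
        have h1 : -M ≤ f (r + 2) - f ε := neg_abs_le _
        have h2 : f (r + 2) - f ε ≤ M := le_abs_self _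
        have haε : 0 ≤ a - ε := by linarith
        simp only [pow_zero, one_mul]
        nlinarith [hk, h1, h2]
      | succ n ih =>
        intro a ha1 ha2
        have ha0 : 0 < a := lt_of_lt_of_le hr0 ha1
        set b : ℝ := (a + (r + 1)) / 2 with hb
        have hab : a < b := by rw [hb]; linarith
        have hb1 : b < r + 1 := by rw [hb]; linarith
        have hrb : r ≤ b := le_of_lt (lt_of_le_of_lt ha1 hab)
        have hb0 : 0 < b := lt_of_lt_of_le hr0 hrb
        have hk := key a b ha0 hab
        have hib := ih b hrb hb1
        have haε : 0 < a - ε := by linarith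
        have hcb : a - ε ≤ q * b := by
          rw [hq, div_mul_eq_mul_div, le_div_iff₀ hr1]
          nlinarith
        have hqM : 0 ≤ q ^ (n + 1) * M := mul_nonneg (pow_nonneg hq0 _) hM0
        rcases le_or_gt 0 (f b - f ε) with hub | hub
        · have h0 : 0 ≤ (f a - f ε) * b :=
            le_trans (mul_nonneg haε.le hub) hk
          nlinarith [h0, hb0, hqM]
        · have e1 : q * b * (f b - f ε) ≤ (a - ε) * (f b - f ε) :=
            mul_le_mul_of_nonpos_right hcb hub.le
          have e2 : q * b * (-(q ^ n * M)) ≤ q * b * (f b - f ε) :=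
            mul_le_mul_of_nonneg_left hib (mul_nonneg hq0 hb0.le)
          have e3 : (-(q ^ (n + 1) * M)) * b ≤ (f a - f ε) * b := by
            have : q * b * (-(q ^ n * M)) = (-(q ^ (n + 1) * M)) * b := by ring
            linarith [le_trans (le_trans e2 e1) hk]
          exact le_of_mul_le_mul_right e3 hb0
    have t1 : Tendsto (fun n : ℕ => q ^ n) atTop (nhds 0) :=
      tendsto_pow_atTop_nhds_zero_of_lt_one hq0 hq1
    have t2 : Tendsto (fun n : ℕ => -(q ^ n * M)) atTop (nhds 0) := by
      have := (t1.mul_const M).neg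
      simpa using this
    exact le_of_tendsto t2 (Eventually.of_forall fun n => C n r le_rfl (by linarith))
  -- Step 3: the infimum of difference quotients
  set S : Set ℝ := (fun r => (f r - f ε) / (r - ε)) '' Ioi ε with hS
  have hSne : S.Nonempty :=
    ⟨_, mem_image_of_mem _ (mem_Ioi.mpr (lt_add_of_pos_right ε one_pos))⟩
  have hSlb : ∀ x ∈ S, (0:ℝ) ≤ x := by
    rintro x ⟨r, hr, rfl⟩
    rw [mem_Ioi] at hr
    exact div_nonneg (nonneg r hr) (by linarith)
  have hSbd : BddBelow S := ⟨0, hSlb⟩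
  set A : ℝ := sInf S with hA
  have hA0 : 0 ≤ A := le_csInf hSne hSlb
  have hAle : ∀ r : ℝ, ε < r → A ≤ (f r - f ε) / (r - ε) := fun r hr =>
    csInf_le hSbd ⟨r, mem_Ioi.mpr hr, rfl⟩
  -- monotonicity consequence of key
  have mono : ∀ r s : ℝ, ε < r → r < s →
      (f s - f ε) / s ≤ (f r - f ε) / (r - ε) := by
    intro r s hr hrs
    have hs : 0 < s := (hε.trans hr).trans hrs
    have hrε : 0 < r - ε := by linarith
    rw [div_le_div_iff₀ hs hrε]
    nlinarith [key r s (hε.trans hr) hrs]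
  -- Step 4: real convergence to A
  have main : Tendsto (fun s : ℝ => f s / s) atTop (nhds A) := by
    rw [Metric.tendsto_atTop]
    intro η hη
    obtain ⟨x, hxS, hxlt⟩ := exists_lt_of_csInf_lt hSne
      (show sInf S < A + η / 4 by rw [← hA]; linarith)
    obtain ⟨r₀, hr₀, rfl⟩ := hxS
    rw [mem_Ioi] at hr₀
    refine ⟨max (r₀ + 1) (max ((4 * f ε) / η + ε + 1) ((4 * A * ε) / η + ε + 1)), ?_⟩
    intro s hs
    have hs1 : r₀ + 1 ≤ s := le_trans (le_max_left _ _) hs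
    have hs2 : (4 * f ε) / η + ε + 1 ≤ s :=
      le_trans (le_trans (le_max_left _ _) (le_max_right _ _)) hs
    have hs3 : (4 * A * ε) / η + ε + 1 ≤ s :=
      le_trans (le_trans (le_max_right _ _) (le_max_right _ _)) hs
    have hfε4 : 0 ≤ (4 * f ε) / η := div_nonneg (by linarith) hη.le
    have hAε4 : 0 ≤ (4 * A * ε) / η := div_nonneg (by nlinarith) hη.le
    have hsε : ε < s := by linarith
    have hs0 : 0 < s := hε.trans hsε
    have hr₀s : r₀ < s := by linarith
    -- 4 f ε ≤ η s and 4 A ε ≤ η s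
    have hb1 : 4 * f ε ≤ η * s := by
      have : η * ((4 * f ε) / η) = 4 * f ε := by field_simp
      nlinarith [mul_le_mul_of_nonneg_left hs2 hη.le]
    have hb2 : 4 * A * ε ≤ η * s := by
      have : η * ((4 * A * ε) / η) = 4 * A * ε := by field_simp
      nlinarith [mul_le_mul_of_nonneg_left hs3 hη.le]
    -- upper bound : f s ≤ (A + η/2) * s
    have hup : f s ≤ (A + η / 2) * s := by
      have h1 : (f s - f ε) / s ≤ (f r₀ - f ε) / (r₀ - ε) := mono r₀ s hr₀ hr₀s
      have h2 : (f s - f ε) / s < A + η / 4 := lt_of_le_of_lt h1 hxlt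
      have h3 : f s - f ε < (A + η / 4) * s := by
        rw [div_lt_iff₀ hs0] at h2; linarith
      nlinarith
    -- lower bound : (A - η/4) * s ≤ f s
    have hlo : (A - η / 4) * s ≤ f s := by
      have h1 : A ≤ (f s - f ε) / (s - ε) := hAle s hsε
      have h2 : A * (s - ε) ≤ f s - f ε := by
        rw [← sub_nonneg]
        have := (le_div_iff₀ (by linarith : (0:ℝ) < s - ε)).mp h1
        linarith
      nlinarith
    rw [Real.dist_eq, abs_sub_lt_iff]
    constructor
    · have : f s / s ≤ A + η / 2 := (div_le_iff₀ hs0).mpr hup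
      linarith
    · have : A - η / 4 ≤ f s / s := (le_div_iff₀ hs0).mpr hlo
      linarith
  exact ⟨(A : EReal), by exact_mod_cast hA0, EReal.tendsto_coe.mpr main⟩
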